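/- For every k ≥ 3, consider the k-swap game with exactly two strategic agents of each of the k types (n = 2k) whose topology consists of a cycle α₁, …, α_k where each αℓ is additionally joined to a pendant node βℓ. The assignment v placing an agent of type T_ℓ at αℓ and an agent of type T_{ℓ+1 mod k} at βℓ is an equilibrium with SW(v) = 0, whereas the assignment v* placing both agents of type T_ℓ at αℓ and βℓ satisfies SW(v*) > 0. Hence the social price of anarchy of k-swap games is unbounded for every k ≥ 3, even with an equal number of strategic agents per type. -/

import Mathlib

open Finset

namespace SwapGame

/-- Build a simple graph from a (not necessarily symmetric) boolean relation
by symmetrizing it and removing loops. -/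
def mkGraph {V : Type*} (r : V → V → Bool) : SimpleGraph V where
  Adj a b := a ≠ b ∧ (r a b ∨ r b a)
  symm := ⟨fun a b h => ⟨Ne.symm h.1, Or.symm h.2⟩⟩
  loopless := ⟨fun a h => h.1 rfl⟩

instance mkGraph.instDecidableRel {V : Type*} [DecidableEq V] (r : V → V → Bool) :
    DecidableRel (mkGraph r).Adj :=
  fun a b => inferInstanceAs (Decidable (a ≠ b ∧ (r a b ∨ r b a)))

variable {A V K : Type*} [Fintype V] [DecidableEq A] [DecidableEq V] [DecidableEq K]

/-- The assignment obtained from `σ` by swapping the locations of agents `i` and `j`. -/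
def swapA (σ : A ≃ V) (i j : A) : A ≃ V := (Equiv.swap i j).trans σ

/-- The utility of agent `i` under assignment `σ`: the fraction of the neighbors of the
node of `i` that are occupied by agents of the same type (friends of `i`). -/
def util (G : SimpleGraph V) [DecidableRel G.Adj] (c : A → K) (σ : A ≃ V) (i : A) : ℚ :=
  (((G.neighborFinset (σ i)).filter (fun w => c (σ.symm w) = c i)).card : ℚ) /
    ((G.neighborFinset (σ i)).card : ℚ)

/-- Agents `i` and `j` both strictly increase their utility by swapping their locations. -/
def improving (G : SimpleGraph V) [DecidableRel G.Adj] (c : A → K) (σ : A ≃ V)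
    (i j : A) : Prop :=
  util G c σ i < util G c (swapA σ i j) i ∧ util G c σ j < util G c (swapA σ i j) j

/-- An assignment is an equilibrium if no pair of agents can both strictly increase
their utility by swapping positions. -/
def isEquilibrium (G : SimpleGraph V) [DecidableRel G.Adj] (c : A → K) (σ : A ≃ V) : Prop :=
  ¬ ∃ i j : A, improving G c σ i j

/-- The social welfare of an assignment: the sum of the utilities of all agents. -/
def SW [Fintype A] (G : SimpleGraph V) [DecidableRel G.Adj] (c : A → K) (σ : A ≃ V) : ℚ :=
  ∑ i : A, util G c σ i

/-- Agent `i` is exposed: at least one neighbor is occupied by an agent of another type. -/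
def exposed (G : SimpleGraph V) [DecidableRel G.Adj] (c : A → K) (σ : A ≃ V) (i : A) : Prop :=
  ((G.neighborFinset (σ i)).filter (fun w => c (σ.symm w) ≠ c i)).Nonempty

instance exposed.instDecidable (G : SimpleGraph V) [DecidableRel G.Adj] (c : A → K)
    (σ : A ≃ V) : DecidablePred (exposed G c σ) :=
  fun _ => inferInstanceAs (Decidable (Finset.Nonempty _))

/-- The degree of integration of an assignment: the number of exposed agents. -/
def DI [Fintype A] (G : SimpleGraph V) [DecidableRel G.Adj] (c : A → K) (σ : A ≃ V) : ℕ :=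
  (univ.filter (fun i : A => exposed G c σ i)).card

end SwapGame

namespace SwapGame

/-- The topology: a cycle `α₁, …, α_k` (the `inl` nodes, with `αℓ ~ αℓ₊₁ (mod k)`),
where each `αℓ` is additionally joined to a pendant node `βℓ` (the `inr` nodes). -/
def adjCyc (k : ℕ) : (Fin k ⊕ Fin k) → (Fin k ⊕ Fin k) → Bool
  | .inl i, .inl j => (j : ℕ) == ((i : ℕ) + 1) % k
  | .inl i, .inr j => i == j
  | _, _ => false

abbrev GCyc (k : ℕ) : SimpleGraph (Fin k ⊕ Fin k) := mkGraph (adjCyc k)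

/-- Agents: two agents of each of the `k` types; the type of an agent is its first
component. -/
abbrev ACyc (k : ℕ) := Fin k × Fin 2

section Aux

-- ### auxiliary lemmas

variable {k : ℕ} [NeZero k]

lemma val_add_one (hk : 3 ≤ k) (a : Fin k) : ((a + 1 : Fin k) : ℕ) = ((a : ℕ) + 1) % k := by
  rw [Fin.add_def]
  simp [Fin.val_one', Nat.mod_eq_of_lt (show 1 < k by omega)]

lemma add_one_ne (hk : 3 ≤ k) (a : Fin k) : a + 1 ≠ a := by
  rw [ne_eq, add_eq_left, Fin.ext_iff]
  simp [Fin.val_one', Nat.mod_eq_of_lt (show 1 < k by omega)]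

lemma add_two_ne (hk : 3 ≤ k) (a : Fin k) : a + 1 + 1 ≠ a := by
  rw [ne_eq, add_assoc, add_eq_left, Fin.ext_iff, Fin.add_def]
  simp [Fin.val_one', Nat.mod_eq_of_lt (show 1 < k by omega),
    Nat.mod_eq_of_lt (show 1 + 1 < k by omega)]


lemma sub_one_ne (hk : 3 ≤ k) (a : Fin k) : a - 1 ≠ a := by
  intro h
  have h2 := congrArg (· + 1) h
  simp only [sub_add_cancel] at h2
  exact add_one_ne hk a h2.symm

lemma adj_def (u v : Fin k ⊕ Fin k) :
    (GCyc k).Adj u v ↔ u ≠ v ∧ (adjCyc k u v = true ∨ adjCyc k v u = true) := Iff.rfl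

lemma adjCyc_inl_inl (i j : Fin k) :
    adjCyc k (.inl i) (.inl j) = ((j : ℕ) == ((i : ℕ) + 1) % k) := rfl

lemma adjCyc_inl_inr (i j : Fin k) : adjCyc k (.inl i) (.inr j) = (i == j) := rfl

lemma adjCyc_inr (a : Fin k) (w : Fin k ⊕ Fin k) : adjCyc k (.inr a) w = false := by
  cases w <;> rfl

lemma adj_inr_iff (a : Fin k) (w : Fin k ⊕ Fin k) :
    (GCyc k).Adj (.inr a) w ↔ w = .inl a := by
  cases w with
  | inl j =>
    rw [adj_def, adjCyc_inr, adjCyc_inl_inr]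
    simp only [ne_eq, reduceCtorEq, not_false_iff, true_and, false_or, beq_iff_eq,
      Sum.inl.injEq]
  | inr j =>
    rw [adj_def, adjCyc_inr, adjCyc_inr]
    simp only [or_self, and_false, reduceCtorEq, Bool.false_eq_true]

lemma fin_eq_add_one_iff (hk : 3 ≤ k) (a j : Fin k) :
    j = a + 1 ↔ (j : ℕ) = ((a : ℕ) + 1) % k := by
  rw [Fin.ext_iff, val_add_one hk a]

lemma adj_inl_iff (hk : 3 ≤ k) (a : Fin k) (w : Fin k ⊕ Fin k) :
    (GCyc k).Adj (.inl a) w ↔ w = .inl (a + 1) ∨ w = .inl (a - 1) ∨ w = .inr a := by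
  cases w with
  | inl j =>
    rw [adj_def, adjCyc_inl_inl, adjCyc_inl_inl]
    simp only [Sum.inl.injEq, ne_eq, reduceCtorEq, or_false, beq_iff_eq]
    constructor
    · rintro ⟨hne, h | h⟩
      · exact Or.inl ((fin_eq_add_one_iff hk a j).2 h)
      · right
        rw [eq_sub_iff_add_eq, eq_comm, fin_eq_add_one_iff hk j a]
        exact h
    · rintro (rfl | rfl)
      · exact ⟨fun h => add_one_ne hk a h.symm,
          Or.inl ((fin_eq_add_one_iff hk a (a + 1)).1 rfl)⟩
      · refine ⟨fun h => sub_one_ne hk a h.symm, Or.inr ?_⟩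
        rw [← fin_eq_add_one_iff hk (a - 1) a]
        exact (sub_add_cancel a 1).symm
    | inr j =>
    rw [adj_def, adjCyc_inl_inr, adjCyc_inr]
    simp only [ne_eq, reduceCtorEq, not_false_iff, true_and, or_false, beq_iff_eq,
      Sum.inr.injEq, Bool.false_eq_true, reduceCtorEq, false_or]
    exact eq_comm


-- ### the two assignments

def sigmaBad (k : ℕ) [NeZero k] : ACyc k ≃ (Fin k ⊕ Fin k) where
  toFun p := if p.2 = 0 then .inl p.1 else .inr (p.1 - 1)
  invFun v := Sum.elim (fun ℓ => (ℓ, 0)) (fun ℓ => (ℓ + 1, 1)) v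
  left_inv p := by
    obtain ⟨a, x⟩ := p
    fin_cases x <;> simp [sub_add_cancel]
  right_inv v := by
    cases v with
    | inl ℓ => simp
    | inr ℓ => simp

def sigmaGood (k : ℕ) [NeZero k] : ACyc k ≃ (Fin k ⊕ Fin k) where
  toFun p := if p.2 = 0 then .inl p.1 else .inr p.1
  invFun v := Sum.elim (fun ℓ => (ℓ, 0)) (fun ℓ => (ℓ, 1)) v
  left_inv p := by
    obtain ⟨a, x⟩ := p
    fin_cases x <;> simp
  right_inv v := by
    cases v with
    | inl ℓ => simp
    | inr ℓ => simp

@[simp] lemma sigmaBad_zero (a : Fin k) : sigmaBad k (a, 0) = .inl a := rfl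
@[simp] lemma sigmaBad_one (a : Fin k) : sigmaBad k (a, 1) = .inr (a - 1) := rfl
@[simp] lemma sigmaBad_symm_inl (a : Fin k) : (sigmaBad k).symm (.inl a) = (a, 0) := rfl
@[simp] lemma sigmaBad_symm_inr (a : Fin k) : (sigmaBad k).symm (.inr a) = (a + 1, 1) := rfl
@[simp] lemma sigmaGood_zero (a : Fin k) : sigmaGood k (a, 0) = .inl a := rfl
@[simp] lemma sigmaGood_one (a : Fin k) : sigmaGood k (a, 1) = .inr a := rfl
@[simp] lemma sigmaGood_symm_inl (a : Fin k) : (sigmaGood k).symm (.inl a) = (a, 0) := rfl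
@[simp] lemma sigmaGood_symm_inr (a : Fin k) : (sigmaGood k).symm (.inr a) = (a, 1) := rfl

-- ### utility lemmas

variable {A K V : Type*} [Fintype V] [DecidableEq A] [DecidableEq V] [DecidableEq K]

lemma util_nonneg (G : SimpleGraph V) [DecidableRel G.Adj] (c : A → K) (σ : A ≃ V) (i : A) :
    0 ≤ util G c σ i :=
  div_nonneg (Nat.cast_nonneg _) (Nat.cast_nonneg _)

lemma util_eq_zero (G : SimpleGraph V) [DecidableRel G.Adj] {c : A → K} {σ : A ≃ V} {i : A}
    (h : ∀ w ∈ G.neighborFinset (σ i), ¬ c (σ.symm w) = c i) : util G c σ i = 0 := by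
  unfold util
  rw [Finset.filter_false_of_mem h]
  simp

lemma exists_of_util_pos (G : SimpleGraph V) [DecidableRel G.Adj] {c : A → K} {σ : A ≃ V}
    {i : A} (h : 0 < util G c σ i) :
    ∃ w ∈ G.neighborFinset (σ i), c (σ.symm w) = c i := by
  by_contra hc
  push_neg at hc
  rw [util_eq_zero G hc] at h
  exact lt_irrefl _ h

lemma swapA_apply_left (σ : A ≃ V) (i j : A) : swapA σ i j i = σ j := by
  simp [swapA]

lemma swapA_symm_apply (σ : A ≃ V) (i j : A) (w : V) :
    (swapA σ i j).symm w = Equiv.swap i j (σ.symm w) := by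
  simp [swapA]


-- ### the bad assignment is a zero-welfare equilibrium

lemma fin2_cases : ∀ x : Fin 2, x = 0 ∨ x = 1 := by decide

lemma fin2_ne_imp : ∀ z x : Fin 2, z ≠ x → z = x + 1 := by decide

lemma fin2_add01 : (0 : Fin 2) + 1 = 1 := rfl
lemma fin2_add11 : (1 : Fin 2) + 1 = 0 := rfl

lemma utilBad_zero (hk : 3 ≤ k) (i : ACyc k) :
    util (GCyc k) Prod.fst (sigmaBad k) i = 0 := by
  apply util_eq_zero
  intro w hw
  rw [SimpleGraph.mem_neighborFinset] at hw
  obtain ⟨a, x⟩ := i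
  rcases fin2_cases x with rfl | rfl
  · rw [sigmaBad_zero, adj_inl_iff hk] at hw
    rcases hw with rfl | rfl | rfl
    · simpa using add_one_ne hk a
    · simpa using sub_one_ne hk a
    · simpa using add_one_ne hk a
  · rw [sigmaBad_one, adj_inr_iff] at hw
    subst hw
    simpa using sub_one_ne hk a

lemma improving_cases (hk : 3 ≤ k) {i j : ACyc k} (hij : i ≠ j)
    (h : 0 < util (GCyc k) Prod.fst (swapA (sigmaBad k) i j) i) :
    (j.1 = i.1 ∧ (GCyc k).Adj (sigmaBad k j) (sigmaBad k i)) ∨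
      (GCyc k).Adj (sigmaBad k j) (sigmaBad k (i.1, i.2 + 1)) := by
  obtain ⟨w, hw, hc⟩ := exists_of_util_pos _ h
  rw [swapA_apply_left, SimpleGraph.mem_neighborFinset] at hw
  rw [swapA_symm_apply] at hc
  set o := (sigmaBad k).symm w with ho
  have hwo : w = sigmaBad k o := (Equiv.apply_symm_apply _ _).symm
  have hoj : o ≠ j := by
    intro h'
    exact (GCyc k).ne_of_adj hw (by rw [hwo, h'])
  by_cases hoi : o = i
  · rw [hoi, Equiv.swap_apply_left] at hc
    left
    refine ⟨hc, ?_⟩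
    rw [← hoi, ← hwo]
    exact hw
  · rw [Equiv.swap_apply_of_ne_of_ne hoi hoj] at hc
    right
    have hoo : o = (i.1, i.2 + 1) := by
      obtain ⟨c, z⟩ := o
      obtain ⟨a, x⟩ := i
      simp only [Prod.fst] at hc
      subst hc
      have hz : z ≠ x := fun h' => hoi (by rw [h'])
      rw [Prod.mk.injEq]
      exact ⟨rfl, fin2_ne_imp z x hz⟩
    rw [← hoo, ← hwo]
    exact hw

lemma swapA_comm {A V : Type*} [DecidableEq A] (σ : A ≃ V) (i j : A) :
    swapA σ i j = swapA σ j i := by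
  rw [swapA, swapA, Equiv.swap_comm]

lemma eqBad (hk : 3 ≤ k) : isEquilibrium (GCyc k) Prod.fst (sigmaBad k) := by
  rintro ⟨i, j, h⟩
  obtain ⟨h1, h2⟩ := h
  by_cases hij : i = j
  · subst hij
    rw [show swapA (sigmaBad k) i i = sigmaBad k by
      rw [swapA, Equiv.swap_self]; rfl] at h1
    exact lt_irrefl _ h1
  rw [utilBad_zero hk] at h1 h2
  rw [swapA_comm] at h2
  have C1 := improving_cases hk hij h1
  have C2 := improving_cases hk (Ne.symm hij) h2
  obtain ⟨a, x⟩ := i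
  obtain ⟨b, y⟩ := j
  simp only [Prod.fst, Prod.snd] at C1 C2
  by_cases hab : b = a
  · subst hab
    have hxy : y ≠ x := fun h' => hij (by rw [h'])
    have hyx : y = x + 1 := fin2_ne_imp _ _ hxy
    rcases C1 with ⟨-, hadj⟩ | hadj
    · rcases fin2_cases x with rfl | rfl <;> rcases fin2_cases y with rfl | rfl
      · exact absurd rfl hxy
      · rw [sigmaBad_one, sigmaBad_zero, adj_inr_iff] at hadj
        have h' : b = b - 1 := by injection hadj
        exact sub_one_ne hk b h'.symm
      · rw [sigmaBad_zero, sigmaBad_one, adj_inl_iff hk] at hadj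
        rcases hadj with h' | h' | h'
        · exact absurd h' (by simp)
        · exact absurd h' (by simp)
        · exact sub_one_ne hk b (by injection h')
      · exact absurd rfl hxy
    · rw [hyx] at hadj
      exact (GCyc k).irrefl hadj
  · replace C1 : (GCyc k).Adj (sigmaBad k (b, y)) (sigmaBad k (a, x + 1)) := by
      rcases C1 with ⟨h', -⟩ | h'
      · exact absurd h' hab
      · exact h'
    replace C2 : (GCyc k).Adj (sigmaBad k (a, x)) (sigmaBad k (b, y + 1)) := by
      rcases C2 with ⟨h', -⟩ | h'
      · exact absurd h' (Ne.symm hab)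
      · exact h'
    have key : ∀ c : Fin k, c = c - 1 - 1 → False := by
      intro c hc
      apply add_two_ne hk c
      conv_lhs => rw [hc]
      rw [sub_add_cancel, sub_add_cancel]
    rcases fin2_cases x with rfl | rfl <;> rcases fin2_cases y with rfl | rfl <;>
      simp only [fin2_add01, fin2_add11, sigmaBad_zero, sigmaBad_one] at C1 C2
    · -- C1 : Adj (inl b) (inr (a-1)), C2 : Adj (inl a) (inr (b-1))
      rw [adj_inl_iff hk] at C1 C2
      have h1' : b = a - 1 := by
        rcases C1 with h' | h' | h'
        · exact absurd h' (by simp)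
        · exact absurd h' (by simp)
        · exact (by injection h' : (a : Fin k) - 1 = b).symm
      have h2' : a = b - 1 := by
        rcases C2 with h' | h' | h'
        · exact absurd h' (by simp)
        · exact absurd h' (by simp)
        · exact (by injection h' : (b : Fin k) - 1 = a).symm
      exact key a (h2'.trans (congrArg (· - 1) h1'))
    · rw [adj_inr_iff] at C1
      exact absurd C1 (by simp)
    · rw [adj_inr_iff] at C2
      exact absurd C2 (by simp)
    · rw [adj_inr_iff] at C1 C2
      have h1' : a = b - 1 := by injection C1
      have h2' : b = a - 1 := by injection C2
      exact key a (h1'.trans (congrArg (· - 1) h2'))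
lemma SWBad_zero (hk : 3 ≤ k) : SW (GCyc k) Prod.fst (sigmaBad k) = 0 :=
  Finset.sum_eq_zero fun i _ => utilBad_zero hk i

lemma SWGood_pos (hk : 3 ≤ k) : 0 < SW (GCyc k) Prod.fst (sigmaGood k) := by
  have h1 : util (GCyc k) Prod.fst (sigmaGood k) ((0 : Fin k), (1 : Fin 2)) = 1 := by
    have hn : (GCyc k).neighborFinset (Sum.inr (0 : Fin k)) = {Sum.inl 0} := by
      ext w
      rw [SimpleGraph.mem_neighborFinset, adj_inr_iff, Finset.mem_singleton]
    unfold util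
    rw [sigmaGood_one, hn]
    rw [Finset.filter_singleton]
    simp
  apply Finset.sum_pos' (fun i _ => util_nonneg _ _ _ _)
  exact ⟨((0 : Fin k), (1 : Fin 2)), Finset.mem_univ _, by rw [h1]; norm_num⟩

end Aux

/-- for every `k ≥ 3`, in the `k`-swap game with two strategic agents of
each type on the cycle-with-pendants topology, the assignment placing an agent of type
`ℓ` at `αℓ` and an agent of type `ℓ+1 (mod k)` at `βℓ` is an equilibrium with social
welfare `0`, whereas the assignment placing both agents of type `ℓ` at `αℓ` and `βℓ`
has strictly positive social welfare. Hence the social price of anarchy of `k`-swap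
games is unbounded for every `k ≥ 3`, even with an equal number of strategic agents
per type. -/
theorem poa_unbounded_three_types (k : ℕ) (hk : 3 ≤ k) :
    (∃ σ : ACyc k ≃ (Fin k ⊕ Fin k),
        (∀ ℓ : Fin k, (σ.symm (Sum.inl ℓ)).1 = ℓ ∧ ((σ.symm (Sum.inr ℓ)).1 : ℕ) = ((ℓ : ℕ) + 1) % k) ∧
        isEquilibrium (GCyc k) Prod.fst σ ∧ SW (GCyc k) Prod.fst σ = 0) ∧
    (∃ σ : ACyc k ≃ (Fin k ⊕ Fin k),
        (∀ ℓ : Fin k, (σ.symm (Sum.inl ℓ)).1 = ℓ ∧ (σ.symm (Sum.inr ℓ)).1 = ℓ) ∧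
        0 < SW (GCyc k) Prod.fst σ) := by
  haveI : NeZero k := ⟨by omega⟩
  refine ⟨⟨sigmaBad k, fun ℓ => ⟨rfl, ?_⟩, eqBad hk, SWBad_zero hk⟩,
    ⟨sigmaGood k, fun ℓ => ⟨rfl, rfl⟩, SWGood_pos hk⟩⟩
  rw [sigmaBad_symm_inr]
  exact val_add_one hk ℓ

end SwapGame
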